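/- Let n ≥ 1 and let F: ℝⁿ × ℝ → ℝⁿ satisfy the translation (flow) equation F(F(x,s), t) = F(x, s+t) for all x ∈ ℝⁿ and s, t ∈ ℝ. Define φ: ℝⁿ × (ℝ∖{0}) → ℝⁿ⁺¹ by φ(y, w) = (w·F(y/w, w), w). Then φ satisfies the projective translation equation: for all x ∈ ℝⁿ, z ∈ ℝ and s, t ∈ ℝ with zt ≠ 0, zs ≠ 0 and z(t+s) ≠ 0, one has (1/(t+s))·φ(x(t+s), z(t+s)) = (1/s)·φ( φ(xt, zt)·(s/t) ). Moreover F(x,t) = (1/t)·φ(xt, t) for t ≠ 0, so every flow in ℝⁿ is a section on the hyperplane z = 1 of an (n+1)-dimensional projective flow. -/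

import Mathlib

/-- Every flow `F` in `ℝⁿ` is a section on the hyperplane `z = 1` of the
`(n+1)`-dimensional projective flow `φ(y, w) = (w·F(y/w, w), w)`: the map `φ` satisfies
the projective translation equation
`(1/(t+s))·φ(𝐱(t+s)) = (1/s)·φ(φ(𝐱t)·(s/t))` wherever the last coordinates are nonzero,
and `F(x,t) = (1/t)·φ(xt, t)` for `t ≠ 0`. -/
theorem stmt18 (n : ℕ) (hn : 1 ≤ n) (F : (Fin n → ℝ) → ℝ → (Fin n → ℝ))
    (hF : ∀ (x : Fin n → ℝ) (s t : ℝ), F (F x s) t = F x (s + t))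
    (Φ : (Fin n → ℝ) × ℝ → (Fin n → ℝ) × ℝ)
    (hΦ : ∀ (y : Fin n → ℝ) (w : ℝ), Φ (y, w) = (w • F (w⁻¹ • y) w, w)) :
    (∀ (x : Fin n → ℝ) (z s t : ℝ), z * t ≠ 0 → z * s ≠ 0 → z * (t + s) ≠ 0 →
      (1 / (t + s)) • Φ ((t + s) • (x, z)) = (1 / s) • Φ ((s / t) • Φ (t • (x, z)))) ∧
    (∀ (x : Fin n → ℝ) (t : ℝ), t ≠ 0 →
      (1 / t) • Φ (t • (x, (1 : ℝ))) = (F x t, (1 : ℝ))) := by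
  constructor
  · intro x z s t hzt hzs hzts
    have hz : z ≠ 0 := fun h => hzt (by simp [h])
    have ht : t ≠ 0 := fun h => hzt (by simp [h])
    have hs : s ≠ 0 := fun h => hzs (by simp [h])
    have hts : t + s ≠ 0 := fun h => hzts (by simp [h])
    simp only [Prod.smul_mk, smul_eq_mul, hΦ, Prod.smul_mk, smul_smul, smul_eq_mul]
    have e1 : 1 / (t + s) * ((t + s) * z) = z := by field_simp <;> try ring
    have e2 : ((t + s) * z)⁻¹ * (t + s) = z⁻¹ := by field_simp <;> try ring
    have e3 : s / t * (t * z) = s * z := by field_simp <;> try ring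
    have e4 : (s * z)⁻¹ * (s * z) = 1 := by field_simp <;> try ring
    have e5 : (t * z)⁻¹ * t = z⁻¹ := by field_simp <;> try ring
    have e6 : 1 / s * (s * z) = z := by field_simp <;> try ring
    rw [e1, e2, e3, e4, e5, e6, one_smul, hF]
    have e7 : t * z + s * z = (t + s) * z := by ring
    rw [e7]
  · intro x t ht
    rw [show t • (x, (1:ℝ)) = (t • x, t * 1) from rfl]
    rw [mul_one, hΦ]
    rw [show t⁻¹ • t • x = x from by rw [smul_smul, inv_mul_cancel₀ ht, one_smul]]
    rw [show ((1:ℝ)/t) • (t • F x t, t) = ((1/t) • t • F x t, (1/t)*t) from rfl]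
    rw [smul_smul]
    field_simp
    rw [one_smul]
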